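/- Let w : ℝ → (0,∞) be continuous with 1/w not Lebesgue-integrable on (−∞,0) and not Lebesgue-integrable on (0,∞), let p_w(ξ) = ∫₀^ξ w(ζ)⁻¹ dζ, and let θ > 0. Let x ∈ L²_w(ℝ) be such that w·x is locally absolutely continuous with (w·x)′ ∈ L²_w(ℝ), and put y := θ·x − (w·x)′ ∈ L²_w(ℝ). Then for every ξ ∈ ℝ the integral ∫_ξ^∞ e^{−θ(p_w(s)−p_w(ξ))} y(s) ds converges absolutely, and for almost every ξ ∈ ℝ one has (1/w(ξ)) ∫_ξ^∞ e^{−θ(p_w(s)−p_w(ξ))} y(s) ds = x(ξ). (This is the resolvent identity R(θ)(θ − A_w)x = x for the generator A_w x = (w·x)′.) -/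

import Mathlib

open MeasureTheory Filter Set Topology

/-- `p_w(ξ) = ∫₀^ξ w(ζ)⁻¹ dζ`. -/
noncomputable def pW (w : ℝ → ℝ) (ξ : ℝ) : ℝ := ∫ ζ in (0:ℝ)..ξ, (w ζ)⁻¹

section aux

set_option linter.unusedSectionVars false

variable {w : ℝ → ℝ} (hw_cont : Continuous w) (hw_pos : ∀ ξ, 0 < w ξ)
include hw_cont hw_pos

lemma winv_cont : Continuous fun ζ => (w ζ)⁻¹ :=
  Continuous.inv₀ hw_cont fun ζ => (hw_pos ζ).ne'

lemma hasDerivAt_pW (s : ℝ) : HasDerivAt (pW w) (w s)⁻¹ s := by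
  have h := winv_cont hw_cont hw_pos
  exact intervalIntegral.integral_hasDerivAt_right (h.intervalIntegrable 0 s)
    h.stronglyMeasurable.stronglyMeasurableAtFilter h.continuousAt

lemma pW_cont : Continuous (pW w) := by
  have := fun s => (hasDerivAt_pW hw_cont hw_pos s).continuousAt
  exact continuous_iff_continuousAt.2 this

lemma pW_mono : Monotone (pW w) := by
  intro a b hab
  have h0 : pW w b - pW w a = ∫ ζ in a..b, (w ζ)⁻¹ := by
    rw [pW, pW, ← intervalIntegral.integral_interval_sub_left
      ((winv_cont hw_cont hw_pos).intervalIntegrable 0 b)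
      ((winv_cont hw_cont hw_pos).intervalIntegrable 0 a)]
  have h2 : (0:ℝ) ≤ ∫ ζ in a..b, (w ζ)⁻¹ :=
    intervalIntegral.integral_nonneg hab fun u _ => (inv_pos.2 (hw_pos u)).le
  linarith [h0.le, h0.symm.le]

lemma hasDerivAt_expP (c : ℝ) (s : ℝ) :
    HasDerivAt (fun t => Real.exp (-c * pW w t)) (-c * (w s)⁻¹ * Real.exp (-c * pW w s)) s := by
  have h1 : HasDerivAt (fun t => -c * pW w t) (-c * (w s)⁻¹) s :=
    (hasDerivAt_pW hw_cont hw_pos s).const_mul (-c)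
  simpa [mul_comm] using h1.exp

lemma cont_expP (c : ℝ) : Continuous fun t => Real.exp (-c * pW w t) :=
  Real.continuous_exp.comp (continuous_const.mul (pW_cont hw_cont hw_pos))

lemma cont_k (c : ℝ) : Continuous fun s => c * (w s)⁻¹ * Real.exp (-c * pW w s) :=
  (continuous_const.mul (winv_cont hw_cont hw_pos)).mul (cont_expP hw_cont hw_pos c)

lemma integral_k (c : ℝ) (a b : ℝ) (hab : a ≤ b) :
    ∫ s in Ioc a b, c * (w s)⁻¹ * Real.exp (-c * pW w s)
      = Real.exp (-c * pW w a) - Real.exp (-c * pW w b) := by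
  have hcont := cont_k hw_cont hw_pos c
  have h : ∀ s ∈ Set.uIcc a b, HasDerivAt (fun t => -Real.exp (-c * pW w t))
      (c * (w s)⁻¹ * Real.exp (-c * pW w s)) s := by
    intro s _
    have := (hasDerivAt_expP hw_cont hw_pos c s).neg
    convert (show HasDerivAt (fun t => -Real.exp (-c * pW w t)) _ s from this) using 1; ring
  have := intervalIntegral.integral_eq_sub_of_hasDerivAt h (hcont.intervalIntegrable a b)
  rw [intervalIntegral.integral_of_le hab] at this
  rw [this]; ring

/-- If `pW w` is bounded on `[0,∞)` then `w⁻¹` is integrable on `(0,∞)`. -/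
lemma pW_bound_integrable (M : ℝ) (hM : ∀ T, 0 ≤ T → pW w T ≤ M) :
    IntegrableOn (fun ζ => (w ζ)⁻¹) (Set.Ioi 0) := by
  refine integrableOn_Ioi_of_intervalIntegral_norm_bounded M 0
    (fun i : ℝ => (winv_cont hw_cont hw_pos).integrableOn_Ioc) tendsto_id ?_
  filter_upwards [eventually_ge_atTop (0:ℝ)] with i hi
  simp only [id_eq]
  have h1 : ∫ ζ in (0:ℝ)..i, ‖(w ζ)⁻¹‖ = pW w i := by
    rw [pW]
    refine intervalIntegral.integral_congr fun ζ _ => ?_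
    rw [Real.norm_eq_abs, abs_of_nonneg (inv_pos.2 (hw_pos ζ)).le]
  rw [h1]
  exact hM i hi

/-- Local integrability from weighted square-integrability. -/
lemma loc_int {f : ℝ → ℂ} (hf_meas : AEStronglyMeasurable f volume)
    (hf : Integrable fun s => w s * ‖f s‖ ^ 2) (a b : ℝ) :
    IntegrableOn f (Ioc a b) := by
  refine Integrable.mono'
    ((((winv_cont hw_cont hw_pos).integrableOn_Ioc).add hf.integrableOn).const_mul (1/2))
    hf_meas.restrict ?_
  refine Eventually.of_forall fun s => ?_
  have h1 := hw_pos s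
  have h2 : (0:ℝ) ≤ ‖f s‖ := norm_nonneg _
  have h3 : (0:ℝ) < (w s)⁻¹ := inv_pos.2 h1
  have key : 2 * (w s * ‖f s‖) ≤ 1 + (w s * ‖f s‖)^2 := by nlinarith [sq_nonneg (1 - w s * ‖f s‖)]
  have : ‖f s‖ ≤ 1/2 * ((w s)⁻¹ + w s * ‖f s‖^2) := by
    rw [div_mul_eq_mul_div, le_div_iff₀ (by norm_num : (0:ℝ) < 2)]
    calc ‖f s‖ * 2 = (2 * (w s * ‖f s‖)) * (w s)⁻¹ := by field_simp
    _ ≤ (1 + (w s * ‖f s‖)^2) * (w s)⁻¹ := by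
        exact mul_le_mul_of_nonneg_right key h3.le
    _ = 1 * ((w s)⁻¹ + w s * ‖f s‖ ^ 2) := by field_simp
  simpa using this

/-- The decaying exponential over the weight is integrable on half-lines. -/
lemma int_Edecay (θ : ℝ) (hθ : 0 < θ) (ξ : ℝ) :
    IntegrableOn (fun s => (w s)⁻¹ * Real.exp (-(2*θ) * pW w s)) (Ioi ξ) := by
  refine integrableOn_Ioi_of_intervalIntegral_norm_bounded
    (Real.exp (-(2*θ) * pW w ξ) / (2*θ)) ξ
    (fun i : ℝ => (((winv_cont hw_cont hw_pos)).mul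
      (cont_expP hw_cont hw_pos (2*θ))).integrableOn_Ioc) tendsto_id ?_
  filter_upwards [eventually_ge_atTop ξ] with i hi
  simp only [id_eq]
  have hnorm : ∫ s in ξ..i, ‖(w s)⁻¹ * Real.exp (-(2*θ) * pW w s)‖
      = ∫ s in Ioc ξ i, (w s)⁻¹ * Real.exp (-(2*θ) * pW w s) := by
    rw [← intervalIntegral.integral_of_le hi]
    refine intervalIntegral.integral_congr fun s _ => ?_
    rw [Real.norm_eq_abs,
      abs_of_nonneg (mul_nonneg (inv_pos.2 (hw_pos s)).le (Real.exp_pos _).le)]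
  have h2 := integral_k hw_cont hw_pos (2*θ) ξ i hi
  have h3 : ∫ s in Ioc ξ i, (w s)⁻¹ * Real.exp (-(2*θ) * pW w s)
      = (Real.exp (-(2*θ) * pW w ξ) - Real.exp (-(2*θ) * pW w i)) / (2*θ) := by
    rw [eq_div_iff (ne_of_gt (by positivity : (0:ℝ) < 2*θ)), ← h2, ← integral_mul_const]
    refine setIntegral_congr_fun measurableSet_Ioc fun s _ => ?_
    ring
  rw [hnorm, h3]
  have := Real.exp_pos (-(2*θ) * pW w i)
  rw [div_le_div_iff₀ (by positivity) (by positivity)]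
  nlinarith

/-- Integrability of the resolvent integrand. -/
lemma int_Ey (θ : ℝ) (hθ : 0 < θ) {y : ℝ → ℂ}
    (hy_meas : AEStronglyMeasurable y volume)
    (hy : Integrable fun s => w s * ‖y s‖ ^ 2) (ξ : ℝ) :
    IntegrableOn (fun s => Real.exp (-θ * pW w s) • y s) (Ioi ξ) := by
  refine Integrable.mono'
    ((((int_Edecay hw_cont hw_pos θ hθ ξ).const_mul (1/2))).add
      ((hy.integrableOn).const_mul (1/2)))
    (((cont_expP hw_cont hw_pos θ).aestronglyMeasurable.smul hy_meas).restrict) ?_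
  refine Eventually.of_forall fun s => ?_
  have hws := hw_pos s
  have hsq : Real.exp (-θ * pW w s) * Real.exp (-θ * pW w s)
      = Real.exp (-(2*θ) * pW w s) := by
    rw [← Real.exp_add]; ring_nf
  rw [norm_smul, Real.norm_eq_abs, abs_of_nonneg (Real.exp_pos _).le]
  set a := Real.exp (-θ * pW w s) with ha
  have hapos : 0 < a := Real.exp_pos _
  have key : 2 * (a * ‖y s‖) * w s ≤ a^2 + (w s * ‖y s‖)^2 := by
    nlinarith [sq_nonneg (a - w s * ‖y s‖)]
  have h2 : a * ‖y s‖ ≤ 1/2 * ((w s)⁻¹ * (a*a)) + 1/2 * (w s * ‖y s‖^2) := by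
    rw [div_mul_eq_mul_div, div_mul_eq_mul_div, ← add_div, le_div_iff₀
      (by norm_num : (0:ℝ) < 2), ← sub_nonneg]
    have : 1 * ((w s)⁻¹ * (a * a)) + 1 * (w s * ‖y s‖ ^ 2) - a * ‖y s‖ * 2
        = (a^2 + (w s * ‖y s‖)^2 - 2*(a*‖y s‖)*w s) * (w s)⁻¹ := by
      field_simp
    rw [this]
    have := sub_nonneg.2 key
    positivity
  calc a * ‖y s‖ ≤ 1/2 * ((w s)⁻¹ * (a*a)) + 1/2 * (w s * ‖y s‖^2) := h2
    _ = 1/2 * ((w s)⁻¹ * Real.exp (-(2*θ) * pW w s)) + 1/2 * (w s * ‖y s‖^2) := by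
        rw [ha, hsq]

lemma fubini_step (θ : ℝ) {xd : ℝ → ℂ}
    (hloc : ∀ a b : ℝ, IntegrableOn xd (Ioc a b)) {ξ T : ℝ} (hξT : ξ ≤ T) :
    ∫ s in Ioc ξ T, (θ * (w s)⁻¹ * Real.exp (-θ * pW w s)) • (∫ t in Ioc ξ s, xd t)
      = ∫ t in Ioc ξ T, (Real.exp (-θ * pW w t) - Real.exp (-θ * pW w T)) • xd t := by
  set k : ℝ → ℝ := fun s => θ * (w s)⁻¹ * Real.exp (-θ * pW w s) with hk
  have hkc : Continuous k := cont_k hw_cont hw_pos θ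
  set ν : Measure ℝ := volume.restrict (Ioc ξ T) with hν
  set F : ℝ × ℝ → ℂ := ({z : ℝ × ℝ | z.2 ≤ z.1}).indicator (fun z => k z.1 • xd z.2) with hF
  have hmeasS : MeasurableSet {z : ℝ × ℝ | z.2 ≤ z.1} :=
    measurableSet_le measurable_snd measurable_fst
  have hFint : Integrable F (ν.prod ν) := by
    refine Integrable.indicator ?_ hmeasS
    exact Integrable.smul_prod (hkc.integrableOn_Ioc) (hloc ξ T)
  have hswap : ∫ s, (∫ t, F (s, t) ∂ν) ∂ν = ∫ t, (∫ s, F (s, t) ∂ν) ∂ν :=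
    integral_integral_swap hFint
  have hL : ∀ s ∈ Ioc ξ T, (∫ t, F (s, t) ∂ν) = k s • ∫ t in Ioc ξ s, xd t := by
    intro s hs
    have h1 : (fun t => F (s, t)) = (Iic s).indicator (fun t => k s • xd t) := by
      funext t
      simp only [hF, Set.indicator_apply, Set.mem_setOf_eq, Set.mem_Iic]
    rw [h1, hν, setIntegral_indicator measurableSet_Iic, Set.Ioc_inter_Iic,
      min_eq_right hs.2, integral_smul]
  have hR : ∀ t ∈ Ioc ξ T, (∫ s, F (s, t) ∂ν)
      = (Real.exp (-θ * pW w t) - Real.exp (-θ * pW w T)) • xd t := by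
    intro t ht
    have h1 : (fun s => F (s, t)) = (Ici t).indicator (fun s => k s • xd t) := by
      funext s
      simp only [hF, Set.indicator_apply, Set.mem_setOf_eq, Set.mem_Ici]
    have h2 : Ioc ξ T ∩ Ici t = Icc t T := by
      ext s
      simp only [Set.mem_inter_iff, Set.mem_Ioc, Set.mem_Ici, Set.mem_Icc]
      constructor
      · rintro ⟨⟨_, h⟩, h'⟩; exact ⟨h', h⟩
      · rintro ⟨h', h⟩; exact ⟨⟨lt_of_lt_of_le ht.1 h', h⟩, h'⟩
    rw [h1, hν, setIntegral_indicator measurableSet_Ici, h2, integral_smul_const,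
      integral_Icc_eq_integral_Ioc, integral_k hw_cont hw_pos θ t T ht.2]
  calc ∫ s in Ioc ξ T, k s • (∫ t in Ioc ξ s, xd t)
      = ∫ s, (∫ t, F (s, t) ∂ν) ∂ν := by
        refine (setIntegral_congr_fun measurableSet_Ioc ?_).symm
        intro s hs; exact hL s hs
    _ = ∫ t, (∫ s, F (s, t) ∂ν) ∂ν := hswap
    _ = ∫ t in Ioc ξ T, (Real.exp (-θ * pW w t) - Real.exp (-θ * pW w T)) • xd t := by
        refine setIntegral_congr_fun measurableSet_Ioc ?_
        intro t ht; exact hR t ht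

lemma parts (θ : ℝ) {x xd : ℝ → ℂ}
    (hxd_meas : AEStronglyMeasurable xd volume)
    (hloc : ∀ a b : ℝ, IntegrableOn xd (Ioc a b))
    (hFTC : ∀ a b : ℝ, (w b : ℂ) * x b - (w a : ℂ) * x a = ∫ ζ in a..b, xd ζ)
    {ξ T : ℝ} (hξT : ξ ≤ T) :
    ∫ s in Ioc ξ T, Real.exp (-θ * pW w s) • ((θ : ℂ) * x s - xd s)
      = Real.exp (-θ * pW w ξ) • ((w ξ : ℂ) * x ξ)
        - Real.exp (-θ * pW w T) • ((w T : ℂ) * x T) := by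
  set E : ℝ → ℝ := fun s => Real.exp (-θ * pW w s) with hE
  set k : ℝ → ℝ := fun s => θ * (w s)⁻¹ * E s with hk
  set u : ℝ → ℂ := fun s => (w s : ℂ) * x s with hu
  have hEc : Continuous E := cont_expP hw_cont hw_pos θ
  have hkc : Continuous k := cont_k hw_cont hw_pos θ
  have hII : ∀ a b : ℝ, IntervalIntegrable xd volume a b := by
    intro a b
    rw [intervalIntegrable_iff]
    exact hloc _ _
  have hprim : Continuous fun s => ∫ t in (0:ℝ)..s, xd t :=
    intervalIntegral.continuous_primitive hII 0
  have huc : Continuous u := by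
    have : u = fun s => u 0 + ∫ t in (0:ℝ)..s, xd t := by
      funext s
      have := hFTC 0 s
      simp only [hu]
      linear_combination this
    rw [this]
    exact continuous_const.add hprim
  obtain ⟨C, hC⟩ := (isCompact_Icc (a := ξ) (b := T)).exists_bound_of_continuousOn
    hEc.continuousOn
  have hExd_int : ∀ c : ℝ, IntegrableOn (fun s => (E s - c) • xd s) (Ioc ξ T) := by
    intro c
    refine Integrable.mono' (((hloc ξ T).norm).const_mul (C + |c|)) ?_ ?_
    · exact ((hEc.sub continuous_const).aestronglyMeasurable.smul hxd_meas).restrict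
    · filter_upwards [ae_restrict_mem measurableSet_Ioc] with s hs
      rw [norm_smul]
      have h1 : ‖E s - c‖ ≤ C + |c| := by
        have := hC s (Ioc_subset_Icc_self hs)
        have h2 : ‖E s - c‖ ≤ ‖E s‖ + ‖c‖ := norm_sub_le _ _
        simp only [Real.norm_eq_abs] at *
        linarith
      exact mul_le_mul_of_nonneg_right h1 (norm_nonneg _)
  have hExd_int0 : IntegrableOn (fun s => E s • xd s) (Ioc ξ T) := by
    have := hExd_int 0
    simpa using this
  have hpt : ∀ s, E s • ((θ : ℂ) * x s - xd s) = k s • u s - E s • xd s := by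
    intro s
    have hw0 : (w s : ℂ) ≠ 0 := by
      exact_mod_cast (hw_pos s).ne'
    simp only [hk, hu, Complex.real_smul]
    push_cast
    field_simp
  have hku_int : IntegrableOn (fun s => k s • u s) (Ioc ξ T) :=
    (hkc.smul huc).integrableOn_Ioc
  have hkuξ_int : IntegrableOn (fun s => k s • u ξ) (Ioc ξ T) :=
    (hkc.smul continuous_const).integrableOn_Ioc
  have hkI_cont : Continuous fun s => k s • ∫ t in ξ..s, xd t :=
    hkc.smul (intervalIntegral.continuous_primitive hII ξ)
  have hkI_int : IntegrableOn (fun s => k s • ∫ t in Ioc ξ s, xd t) (Ioc ξ T) := by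
    refine (hkI_cont.integrableOn_Ioc).congr_fun ?_ measurableSet_Ioc
    intro s hs
    simp only
    rw [intervalIntegral.integral_of_le hs.1.le]
  have step1 : ∫ s in Ioc ξ T, E s • ((θ : ℂ) * x s - xd s)
      = (∫ s in Ioc ξ T, k s • u s) - ∫ s in Ioc ξ T, E s • xd s := by
    rw [← integral_sub hku_int hExd_int0]
    exact setIntegral_congr_fun measurableSet_Ioc fun s _ => hpt s
  have step2 : ∀ s ∈ Ioc ξ T, k s • u s = k s • u ξ + k s • ∫ t in Ioc ξ s, xd t := by
    intro s hs
    have h1 : u s = u ξ + ∫ t in Ioc ξ s, xd t := by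
      have := hFTC ξ s
      rw [intervalIntegral.integral_of_le hs.1.le] at this
      simp only [hu] at *
      linear_combination this
    rw [h1, smul_add]
  have step3 : ∫ s in Ioc ξ T, k s • u s
      = (∫ s in Ioc ξ T, k s) • u ξ + ∫ t in Ioc ξ T, (E t - E T) • xd t := by
    rw [setIntegral_congr_fun measurableSet_Ioc step2, integral_add hkuξ_int hkI_int,
      integral_smul_const, fubini_step hw_cont hw_pos θ hloc hξT]
  have hsum : ∫ t in Ioc ξ T, xd t = u T - u ξ := by
    rw [← intervalIntegral.integral_of_le hξT]
    exact (hFTC ξ T).symm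
  have step4 : ∫ t in Ioc ξ T, (E t - E T) • xd t
      = (∫ t in Ioc ξ T, E t • xd t) - E T • (u T - u ξ) := by
    have h1 : ∀ t ∈ Ioc ξ T, (E t - E T) • xd t = E t • xd t - (E T • xd) t := by
      intro t _; simp [sub_smul]
    rw [setIntegral_congr_fun measurableSet_Ioc h1,
      integral_sub hExd_int0 ((hloc ξ T).smul (E T))]
    simp only [Pi.smul_apply]
    rw [integral_smul, hsum]
  rw [step1, step3, step4, integral_k hw_cont hw_pos θ ξ T hξT]
  module

end aux
/-- Resolvent identity `R(θ)(θ − A_w)x = x` for `A_w x = (w·x)'`.  Here `xd`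
denotes the a.e. derivative `(w·x)'` (encoded via the fundamental theorem of
calculus), and `y = θ·x − (w·x)'`. -/
theorem stmt_14 (w : ℝ → ℝ) (hw_cont : Continuous w) (hw_pos : ∀ ξ, 0 < w ξ)
    (hni_neg : ¬ IntegrableOn (fun ζ => (w ζ)⁻¹) (Set.Iio 0))
    (hni_pos : ¬ IntegrableOn (fun ζ => (w ζ)⁻¹) (Set.Ioi 0))
    (θ : ℝ) (hθ : 0 < θ)
    (x xd : ℝ → ℂ)
    (hx_meas : AEStronglyMeasurable x volume)
    (hx : Integrable fun ξ => w ξ * ‖x ξ‖ ^ 2)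
    (hxd_meas : AEStronglyMeasurable xd volume)
    (hxd : Integrable fun ξ => w ξ * ‖xd ξ‖ ^ 2)
    (hFTC : ∀ a b : ℝ, (w b : ℂ) * x b - (w a : ℂ) * x a = ∫ ζ in a..b, xd ζ) :
    (∀ ξ : ℝ, IntegrableOn
        (fun s => Real.exp (-θ * (pW w s - pW w ξ)) • ((θ : ℂ) * x s - xd s))
        (Set.Ici ξ)) ∧
    ∀ᵐ ξ, ((w ξ : ℂ))⁻¹ *
        (∫ s in Set.Ici ξ,
          Real.exp (-θ * (pW w s - pW w ξ)) • ((θ : ℂ) * x s - xd s)) = x ξ := by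
  have hy_meas : AEStronglyMeasurable (fun s => (θ : ℂ) * x s - xd s) volume :=
    (hx_meas.const_mul _).sub hxd_meas
  have hy : Integrable fun s => w s * ‖(θ : ℂ) * x s - xd s‖ ^ 2 := by
    refine Integrable.mono' ((hx.const_mul (2*θ^2)).add (hxd.const_mul 2)) ?_ ?_
    · have h := hw_cont.aestronglyMeasurable.mul (hy_meas.norm.mul hy_meas.norm)
      simp only [pow_two]; exact h
    · refine Eventually.of_forall fun s => ?_
      have hws := hw_pos s
      have h1 : ‖(θ : ℂ) * x s - xd s‖ ≤ θ * ‖x s‖ + ‖xd s‖ := by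
        calc ‖(θ : ℂ) * x s - xd s‖ ≤ ‖(θ : ℂ) * x s‖ + ‖xd s‖ := norm_sub_le _ _
          _ = θ * ‖x s‖ + ‖xd s‖ := by
              rw [norm_mul, Complex.norm_real, Real.norm_eq_abs, abs_of_pos hθ]
      simp only [Pi.add_apply]
      rw [Real.norm_eq_abs, abs_of_nonneg (by positivity)]
      have h2 : ‖(θ : ℂ) * x s - xd s‖^2 ≤ (θ * ‖x s‖ + ‖xd s‖)^2 := by
        have := norm_nonneg ((θ : ℂ) * x s - xd s)
        nlinarith
      have h3 : w s * ‖(θ : ℂ) * x s - xd s‖^2 ≤ w s * (θ * ‖x s‖ + ‖xd s‖)^2 :=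
        mul_le_mul_of_nonneg_left h2 hws.le
      have h4 : (θ * ‖x s‖ + ‖xd s‖)^2 ≤ 2*θ^2*‖x s‖^2 + 2*‖xd s‖^2 := by
        nlinarith [sq_nonneg (θ * ‖x s‖ - ‖xd s‖)]
      have h5 : w s * (θ * ‖x s‖ + ‖xd s‖)^2 ≤ w s * (2*θ^2*‖x s‖^2 + 2*‖xd s‖^2) :=
        mul_le_mul_of_nonneg_left h4 hws.le
      have : w s * (2*θ^2*‖x s‖^2 + 2*‖xd s‖^2)
          = 2*θ^2 * (w s * ‖x s‖^2) + 2 * (w s * ‖xd s‖^2) := by ring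
      linarith
  have hloc : ∀ a b : ℝ, IntegrableOn xd (Ioc a b) :=
    loc_int hw_cont hw_pos hxd_meas hxd
  have hEy : ∀ ξ : ℝ, IntegrableOn
      (fun s => Real.exp (-θ * pW w s) • ((θ : ℂ) * x s - xd s)) (Ioi ξ) :=
    fun ξ => int_Ey hw_cont hw_pos θ hθ hy_meas hy ξ
  have hshift : ∀ ξ s : ℝ, Real.exp (-θ * (pW w s - pW w ξ)) • ((θ : ℂ) * x s - xd s)
      = Real.exp (θ * pW w ξ) • (Real.exp (-θ * pW w s) • ((θ : ℂ) * x s - xd s)) := by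
    intro ξ s
    rw [smul_smul, ← Real.exp_add]
    ring_nf
  have part1 : ∀ ξ : ℝ, IntegrableOn
      (fun s => Real.exp (-θ * (pW w s - pW w ξ)) • ((θ : ℂ) * x s - xd s)) (Set.Ici ξ) := by
    intro ξ
    rw [integrableOn_Ici_iff_integrableOn_Ioi]
    refine ((hEy ξ).smul (Real.exp (θ * pW w ξ))).congr ?_
    refine Eventually.of_forall fun s => ?_
    simp only [Pi.smul_apply]
    exact (hshift ξ s).symm
  refine ⟨part1, Eventually.of_forall fun ξ => ?_⟩
  set J := ∫ s in Ioi ξ, Real.exp (-θ * pW w s) • ((θ : ℂ) * x s - xd s) with hJ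
  have hTend : Tendsto (fun T => ∫ s in ξ..T,
      Real.exp (-θ * pW w s) • ((θ : ℂ) * x s - xd s)) atTop (𝓝 J) :=
    intervalIntegral_tendsto_integral_Ioi ξ (hEy ξ) tendsto_id
  have key : ∀ T, ξ ≤ T → ∫ s in ξ..T, Real.exp (-θ * pW w s) • ((θ : ℂ) * x s - xd s)
      = Real.exp (-θ * pW w ξ) • ((w ξ : ℂ) * x ξ)
        - Real.exp (-θ * pW w T) • ((w T : ℂ) * x T) := by
    intro T hT
    rw [intervalIntegral.integral_of_le hT]
    exact parts hw_cont hw_pos θ hxd_meas hloc hFTC hT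
  have h2 : Tendsto (fun T => Real.exp (-θ * pW w ξ) • ((w ξ : ℂ) * x ξ)
      - Real.exp (-θ * pW w T) • ((w T : ℂ) * x T)) atTop (𝓝 J) := by
    refine hTend.congr' ?_
    filter_upwards [eventually_ge_atTop ξ] with T hT
    exact key T hT
  have h3 : Tendsto (fun T => Real.exp (-θ * pW w T) • ((w T : ℂ) * x T)) atTop
      (𝓝 (Real.exp (-θ * pW w ξ) • ((w ξ : ℂ) * x ξ) - J)) := by
    have h4 := (tendsto_const_nhds
      (x := Real.exp (-θ * pW w ξ) • ((w ξ : ℂ) * x ξ)) (f := (atTop : Filter ℝ))).sub h2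
    simpa using h4
  have hL0 : Real.exp (-θ * pW w ξ) • ((w ξ : ℂ) * x ξ) - J = 0 := by
    by_contra hL
    have hc : 0 < ‖Real.exp (-θ * pW w ξ) • ((w ξ : ℂ) * x ξ) - J‖ := norm_pos_iff.2 hL
    set c2 := ‖Real.exp (-θ * pW w ξ) • ((w ξ : ℂ) * x ξ) - J‖ / 2 with hc2
    have hc2pos : 0 < c2 := by positivity
    have hev : ∀ᶠ T in atTop, c2 < ‖Real.exp (-θ * pW w T) • ((w T : ℂ) * x T)‖ :=
      h3.norm.eventually (eventually_gt_nhds (by rw [hc2]; linarith))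
    obtain ⟨T₀, hT₀⟩ := eventually_atTop.1 hev
    have hExpInt : ∀ T, T₀ ≤ T → ∫ s in Ioc T₀ T, (w s)⁻¹ * Real.exp (2*θ * pW w s)
        = (Real.exp (2*θ * pW w T) - Real.exp (2*θ * pW w T₀)) / (2*θ) := by
      intro T hT
      have h2' : ∫ s in Ioc T₀ T, -(2*θ) * (w s)⁻¹ * Real.exp (2*θ * pW w s)
          = Real.exp (2*θ * pW w T₀) - Real.exp (2*θ * pW w T) := by
        have := integral_k hw_cont hw_pos (-(2*θ)) T₀ T hT
        simpa [neg_neg] using this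
      rw [eq_div_iff (ne_of_gt (by positivity : (0:ℝ) < 2*θ))]
      have h5 : ∫ s in Ioc T₀ T, (w s)⁻¹ * Real.exp (2*θ * pW w s) * (2*θ)
          = -∫ s in Ioc T₀ T, -(2*θ) * (w s)⁻¹ * Real.exp (2*θ * pW w s) := by
        rw [← integral_neg]
        refine setIntegral_congr_fun measurableSet_Ioc fun s _ => ?_
        ring
      rw [← integral_mul_const, h5, h2']
      ring
    have hp1 : ∀ T, T₀ ≤ T → ∀ s ∈ Ioc T₀ T,
        c2^2 * ((w s)⁻¹ * Real.exp (2*θ * pW w s)) ≤ w s * ‖x s‖^2 := by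
      intro T hT s hs
      have hbig := hT₀ s hs.1.le
      have hnorm : ‖Real.exp (-θ * pW w s) • ((w s : ℂ) * x s)‖
          = Real.exp (-θ * pW w s) * (w s * ‖x s‖) := by
        rw [norm_smul, Real.norm_eq_abs, abs_of_pos (Real.exp_pos _), norm_mul,
          Complex.norm_real, Real.norm_eq_abs, abs_of_pos (hw_pos s)]
      rw [hnorm] at hbig
      set a := Real.exp (-θ * pW w s) with ha
      set e2 := Real.exp (2*θ * pW w s) with he2
      have hE2 : a * a * e2 = 1 := by
        rw [ha, he2, ← Real.exp_add, ← Real.exp_add]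
        ring_nf
        exact Real.exp_zero
      have hws := hw_pos s
      set m := w s * ‖x s‖ with hm
      have hmnn : 0 ≤ m := by positivity
      have h5 : c2 * c2 ≤ (a*m) * (a*m) := mul_self_le_mul_self hc2pos.le hbig.le
      have h6 : (a*m) * (a*m) * ((w s)⁻¹ * e2)
          = (a*a*e2) * (w s * (w s)⁻¹) * (w s * ‖x s‖^2) := by
        rw [hm]; ring
      calc c2^2 * ((w s)⁻¹ * e2) = (c2*c2) * ((w s)⁻¹ * e2) := by ring
        _ ≤ (a*m)*(a*m) * ((w s)⁻¹ * e2) := by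
            refine mul_le_mul_of_nonneg_right h5 ?_
            positivity
        _ = w s * ‖x s‖^2 := by
            rw [h6, hE2, mul_inv_cancel₀ hws.ne']
            ring
    set Mx := ∫ s, w s * ‖x s‖^2 with hMx
    have hbnd : ∀ T, T₀ ≤ T →
        Real.exp (2*θ * pW w T) ≤ Real.exp (2*θ * pW w T₀) + (2*θ) * Mx / c2^2 := by
      intro T hT
      have int1 : IntegrableOn (fun s => c2^2 * ((w s)⁻¹ * Real.exp (2*θ * pW w s)))
          (Ioc T₀ T) := by
        refine Continuous.integrableOn_Ioc ?_
        have := cont_expP hw_cont hw_pos (-(2*θ))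
        simp only [neg_neg] at this
        exact continuous_const.mul ((winv_cont hw_cont hw_pos).mul this)
      have hcmp : ∫ s in Ioc T₀ T, c2^2 * ((w s)⁻¹ * Real.exp (2*θ * pW w s))
          ≤ ∫ s in Ioc T₀ T, w s * ‖x s‖^2 :=
        setIntegral_mono_on int1 hx.integrableOn measurableSet_Ioc (hp1 T hT)
      have hle2 : ∫ s in Ioc T₀ T, w s * ‖x s‖^2 ≤ Mx :=
        setIntegral_le_integral hx (Eventually.of_forall fun s => by
          simp only [Pi.zero_apply]
          exact mul_nonneg (hw_pos s).le (sq_nonneg _))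
      rw [integral_const_mul, hExpInt T hT] at hcmp
      have hc4 : (0:ℝ) < c2^2 := pow_pos hc2pos 2
      have h7 : c2^2 * ((Real.exp (2*θ*pW w T) - Real.exp (2*θ*pW w T₀))/(2*θ)) ≤ Mx :=
        le_trans hcmp hle2
      have h2θ : (2*θ:ℝ) ≠ 0 := ne_of_gt (by linarith)
      have e1 : c2^2*((Real.exp (2*θ*pW w T) - Real.exp (2*θ*pW w T₀))/(2*θ))*(2*θ)
          = (Real.exp (2*θ*pW w T) - Real.exp (2*θ*pW w T₀))*c2^2 := by
        rw [mul_assoc, div_mul_cancel₀ _ h2θ]; ring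
      have goal' : (Real.exp (2*θ*pW w T) - Real.exp (2*θ*pW w T₀))*c2^2 ≤ 2*θ*Mx := by
        have h := mul_le_mul_of_nonneg_right h7 (show (0:ℝ) ≤ 2*θ by linarith)
        rw [e1] at h
        linarith
      have h8 := (le_div_iff₀ hc4).2 goal'
      linarith [h8]
    have hMxnn : 0 ≤ Mx := integral_nonneg fun s => mul_nonneg (hw_pos s).le (sq_nonneg _)
    set B := Real.exp (2*θ * pW w T₀) + (2*θ) * Mx / c2^2 with hB
    have hBpos : 0 < B := by
      have h9 : 0 ≤ 2*θ*Mx/c2^2 := div_nonneg (by nlinarith) (by positivity)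
      have h10 := Real.exp_pos (2*θ * pW w T₀)
      rw [hB]; linarith
    have hpT : ∀ T, T₀ ≤ T → pW w T ≤ Real.log B / (2*θ) := by
      intro T hT
      rw [le_div_iff₀ (by linarith : (0:ℝ) < 2*θ)]
      have := (Real.le_log_iff_exp_le hBpos).2 (hbnd T hT)
      linarith [this]
    refine hni_pos (pW_bound_integrable hw_cont hw_pos
      (max (Real.log B / (2*θ)) (pW w T₀)) fun T _ => ?_)
    rcases le_total T T₀ with h | h
    · exact le_trans (pW_mono hw_cont hw_pos h) (le_max_right _ _)
    · exact le_trans (hpT T h) (le_max_left _ _)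
  have hJval : J = Real.exp (-θ * pW w ξ) • ((w ξ : ℂ) * x ξ) := (sub_eq_zero.mp hL0).symm
  have hIci : ∫ s in Set.Ici ξ, Real.exp (-θ * (pW w s - pW w ξ)) • ((θ : ℂ) * x s - xd s)
      = (w ξ : ℂ) * x ξ := by
    rw [MeasureTheory.integral_Ici_eq_integral_Ioi,
      setIntegral_congr_fun measurableSet_Ioi fun s _ => hshift ξ s,
      integral_smul, ← hJ, hJval, smul_smul, ← Real.exp_add]
    ring_nf
    rw [Real.exp_zero, one_smul]
  rw [hIci, inv_mul_cancel_left₀ (by exact_mod_cast (hw_pos ξ).ne' : (w ξ : ℂ) ≠ 0)]
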